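/- Let T be a bounded invertible operator on a Hilbert space with symmetric part satisfying -T_s ≥ s·Id, s > 0. Then the operator T₃ = [-T⁻¹]_s^{-1/2} T⁻¹ satisfies T₃* T₃ = -S⁻¹ where S = T_s, and in particular ‖T₃‖ ≤ 1/√s. -/

import Mathlib

open ContinuousLinearMap

private lemma T3_arith_aux {s : ℝ} (hs : 0 < s) (a b c : ℝ)
    (h1 : s * b ^ 2 ≤ a) (h2 : a ≤ b * c) : s * a ≤ c ^ 2 := by
  nlinarith [sq_nonneg (s * b - c), mul_le_mul_of_nonneg_left h1 hs.le,
    mul_le_mul_of_nonneg_left h2 hs.le]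

theorem T3_adjoint_comp_eq_neg_inv_symmetric_part
    {H : Type*} [NormedAddCommGroup H] [InnerProductSpace ℝ H] [CompleteSpace H]
    (T T' : H →L[ℝ] H) (hT₁ : T ∘L T' = 1) (hT₂ : T' ∘L T = 1)
    (s : ℝ) (hs : 0 < s)
    (hcoerc : ∀ x : H,
      s * ‖x‖ ^ 2 ≤ inner ℝ ((-(((1 : ℝ) / 2) • (T + ContinuousLinearMap.adjoint T))) x) x)
    -- R is the positive self-adjoint square root of -[T⁻¹]_s, with inverse R'
    (R R' : H →L[ℝ] H)
    (hRsa : ContinuousLinearMap.adjoint R = R)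
    (hRpos : ∀ x : H, (0 : ℝ) ≤ inner ℝ (R x) x)
    (hRsq : R ∘L R = -(((1 : ℝ) / 2) • (T' + ContinuousLinearMap.adjoint T')))
    (hR₁ : R ∘L R' = 1) (hR₂ : R' ∘L R = 1) :
    (ContinuousLinearMap.adjoint (R' ∘L T') ∘L (R' ∘L T')) ∘L
        (((1 : ℝ) / 2) • (T + ContinuousLinearMap.adjoint T)) = -1 ∧
    (((1 : ℝ) / 2) • (T + ContinuousLinearMap.adjoint T)) ∘L
        (ContinuousLinearMap.adjoint (R' ∘L T') ∘L (R' ∘L T')) = -1 ∧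
    ‖R' ∘L T'‖ ≤ 1 / Real.sqrt s := by
  set S : H →L[ℝ] H := ((1 : ℝ) / 2) • (T + ContinuousLinearMap.adjoint T) with hS
  have hone : (1 : H →L[ℝ] H) = ContinuousLinearMap.id ℝ H := rfl
  -- adjoint inverse relations
  have hadT' : ContinuousLinearMap.adjoint T' ∘L ContinuousLinearMap.adjoint T = 1 := by
    rw [← adjoint_comp, hT₁, hone, adjoint_id]
  have hadT : ContinuousLinearMap.adjoint T ∘L ContinuousLinearMap.adjoint T' = 1 := by
    rw [← adjoint_comp, hT₂, hone, adjoint_id]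
  -- R' is self-adjoint
  have hR'R : ContinuousLinearMap.adjoint R' ∘L R = 1 := by
    conv_lhs => rw [← hRsa]
    rw [← adjoint_comp, hR₁, hone, adjoint_id]
  have hR'sa : ContinuousLinearMap.adjoint R' = R' := by
    calc ContinuousLinearMap.adjoint R' = ContinuousLinearMap.adjoint R' ∘L (R ∘L R') := by
          rw [hR₁]; ext x; rfl
      _ = (ContinuousLinearMap.adjoint R' ∘L R) ∘L R' := by rw [comp_assoc]
      _ = R' := by rw [hR'R]; ext x; rfl
  -- key operator identities
  have hTS : T' ∘L S = (-(R ∘L R)) ∘L ContinuousLinearMap.adjoint T := by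
    rw [hRsq, neg_neg, hS]
    rw [comp_smul, smul_comp, comp_add, add_comp, hT₂, hadT', add_comm]
  have hST : S ∘L ContinuousLinearMap.adjoint T' = T ∘L (-(R ∘L R)) := by
    rw [hRsq, neg_neg, hS]
    rw [smul_comp, comp_smul, add_comp, comp_add, hadT, hT₁, add_comm]
  -- pointwise versions
  have hTSx : ∀ x : H, T' (S x) = -(R (R (ContinuousLinearMap.adjoint T x))) := by
    intro x
    have := ContinuousLinearMap.ext_iff.mp hTS x
    simpa using this
  have hSTx : ∀ x : H, S (ContinuousLinearMap.adjoint T' x) = -(T (R (R x))) := by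
    intro x
    have := ContinuousLinearMap.ext_iff.mp hST x
    simpa using this
  have hR₂x : ∀ x : H, R' (R x) = x := fun x => ContinuousLinearMap.ext_iff.mp hR₂ x
  have hR₁x : ∀ x : H, R (R' x) = x := fun x => ContinuousLinearMap.ext_iff.mp hR₁ x
  have hadT'x : ∀ x : H, ContinuousLinearMap.adjoint T' (ContinuousLinearMap.adjoint T x) = x :=
    fun x => ContinuousLinearMap.ext_iff.mp hadT' x
  have hT₁x : ∀ x : H, T (T' x) = x := fun x => ContinuousLinearMap.ext_iff.mp hT₁ x
  have e1 : ContinuousLinearMap.adjoint (R' ∘L T')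
      = ContinuousLinearMap.adjoint T' ∘L R' := by rw [adjoint_comp, hR'sa]
  have key1 : (ContinuousLinearMap.adjoint (R' ∘L T') ∘L (R' ∘L T')) ∘L S = -1 := by
    ext x
    simp [e1, hTSx, hR₂x, hadT'x]
  have key2 : S ∘L (ContinuousLinearMap.adjoint (R' ∘L T') ∘L (R' ∘L T')) = -1 := by
    ext x
    simp [e1, hSTx, hR₁x, hT₁x]
  refine ⟨key1, key2, ?_⟩
  set M : H →L[ℝ] H := ContinuousLinearMap.adjoint (R' ∘L T') ∘L (R' ∘L T') with hM
  have key2x : ∀ x : H, S (M x) = -x := by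
    intro x
    have := ContinuousLinearMap.ext_iff.mp key2 x
    simpa using this
  have hsqrt : (0 : ℝ) < Real.sqrt s := Real.sqrt_pos.mpr hs
  apply opNorm_le_bound _ (by positivity)
  intro x
  set T₃ : H →L[ℝ] H := R' ∘L T'
  have hax : (inner ℝ (M x) x : ℝ) = ‖T₃ x‖ ^ 2 := by
    rw [hM, ContinuousLinearMap.comp_apply, adjoint_inner_left, real_inner_self_eq_norm_sq]
  have hlow : s * ‖M x‖ ^ 2 ≤ inner ℝ (M x) x := by
    have h := hcoerc (M x)
    have hx : x = -(S (M x)) := by rw [key2x x, neg_neg]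
    calc s * ‖M x‖ ^ 2 ≤ inner ℝ ((-S) (M x)) (M x) := h
      _ = inner ℝ (M x) (-(S (M x))) := by
          rw [neg_apply]; exact real_inner_comm _ _
      _ = inner ℝ (M x) x := by rw [← hx]
  have hup : (inner ℝ (M x) x : ℝ) ≤ ‖M x‖ * ‖x‖ := real_inner_le_norm _ _
  rw [hax] at hlow hup
  have hkey : s * ‖T₃ x‖ ^ 2 ≤ ‖x‖ ^ 2 := T3_arith_aux hs _ _ _ hlow hup
  have h2 : ‖T₃ x‖ ^ 2 ≤ (1 / Real.sqrt s * ‖x‖) ^ 2 := by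
    have : (1 / Real.sqrt s * ‖x‖) ^ 2 = ‖x‖ ^ 2 / s := by
      rw [mul_pow, div_pow, one_pow, Real.sq_sqrt hs.le]
      ring
    rw [this, le_div_iff₀ hs]
    linarith [hkey]
  calc ‖T₃ x‖ = Real.sqrt (‖T₃ x‖ ^ 2) := by rw [Real.sqrt_sq (norm_nonneg _)]
    _ ≤ Real.sqrt ((1 / Real.sqrt s * ‖x‖) ^ 2) := Real.sqrt_le_sqrt h2
    _ = 1 / Real.sqrt s * ‖x‖ := Real.sqrt_sq (by positivity)
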